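/- Let n ≥ 2 and consider the vector field H = (ζ−ξ) Σ_j η_j ∂_{η_j} + ξ ρ ∂_ρ − 2|η|² ∂_ξ on (0,∞)_ρ × ℝ_ζ × ℝ_ξ × ℝ^{n−1}_η (with ζ constant along the flow). Fix an initial point (ρ₀, ζ, ξ, η) with ζ ≠ 0 satisfying the characteristic constraint −½ ξ(ξ−2ζ) + |η|² = 0. Then the curve Φ(s) = ( ρ₀ (1 + (ξ/(2ζ))(e^{2ζs} − 1)), ζ, 2ξζ / (ξ − (ξ−2ζ)e^{−2ζs}), 2ζ e^{−ζs} η / (ξ − (ξ−2ζ)e^{−2ζs}) ) satisfies Φ(0) = (ρ₀, ζ, ξ, η) and Φ'(s) = H(Φ(s)), for all s in the maximal interval on which the denominator ξ − (ξ−2ζ)e^{−2ζs} is positive; moreover Φ(s) satisfies the characteristic constraint for all such s. -/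

import Mathlib

/-- Explicit integration of the model Hamiltonian flow
`H = (ζ−ξ) η∂_η + ξρ∂_ρ − 2|η|²∂_ξ` (with `ζ` constant) through a characteristic point
with `ζ ≠ 0`: the curve `Φ` given below solves the flow, has the correct initial value,
and preserves the characteristic constraint `−½ξ(ξ−2ζ) + |η|² = 0`, on the set where the
denominator `D s = ξ − (ξ−2ζ)e^{−2ζs}` is positive. -/
theorem bicharacteristic_flow_near_I0
    (n : ℕ) (hn : 2 ≤ n)
    (ρ₀ ξ ζ : ℝ) (η : EuclideanSpace ℝ (Fin (n - 1)))
    (hρ : 0 < ρ₀) (hζ : ζ ≠ 0)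
    (hchar : -(1 / 2) * ξ * (ξ - 2 * ζ) + ‖η‖ ^ 2 = 0) :
    let D : ℝ → ℝ := fun s => ξ - (ξ - 2 * ζ) * Real.exp (-2 * ζ * s)
    let Φρ : ℝ → ℝ := fun s => ρ₀ * (1 + ξ / (2 * ζ) * (Real.exp (2 * ζ * s) - 1))
    let Φξ : ℝ → ℝ := fun s => 2 * ξ * ζ / D s
    let Φη : ℝ → EuclideanSpace ℝ (Fin (n - 1)) :=
      fun s => (2 * ζ * Real.exp (-ζ * s) / D s) • η;
    (Φρ 0 = ρ₀ ∧ Φξ 0 = ξ ∧ Φη 0 = η)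
    ∧ (∀ s : ℝ, 0 < D s →
        HasDerivAt Φρ (Φξ s * Φρ s) s
        ∧ HasDerivAt Φξ (-2 * ‖Φη s‖ ^ 2) s
        ∧ HasDerivAt Φη ((ζ - Φξ s) • Φη s) s)
    ∧ (∀ s : ℝ, 0 < D s → -(1 / 2) * Φξ s * (Φξ s - 2 * ζ) + ‖Φη s‖ ^ 2 = 0) := by
  intro D Φρ Φξ Φη
  have hη2 : ‖η‖ ^ 2 = ξ * (ξ - 2 * ζ) / 2 := by linarith
  have hnorm : ∀ s : ℝ, ‖Φη s‖ ^ 2 = (2 * ζ * Real.exp (-ζ * s) / D s) ^ 2 * ‖η‖ ^ 2 := by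
    intro s
    show ‖(2 * ζ * Real.exp (-ζ * s) / D s) • η‖ ^ 2 = _
    rw [norm_smul, Real.norm_eq_abs, mul_pow, sq_abs]
  have hEsq : ∀ s : ℝ, Real.exp (-ζ * s) ^ 2 = Real.exp (-2 * ζ * s) := by
    intro s
    rw [sq, ← Real.exp_add]; ring_nf
  constructor
  · refine ⟨?_, ?_, ?_⟩
    · simp [Φρ]
    · simp only [Φξ, D]
      rw [mul_zero, Real.exp_zero]
      field_simp; ring
    · show (2 * ζ * Real.exp (-ζ * 0) / D 0) • η = η
      have hD0 : D 0 = 2 * ζ := by simp [D]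
      rw [hD0, mul_zero, Real.exp_zero, mul_one,
        div_self (mul_ne_zero two_ne_zero hζ), one_smul]
  constructor
  · intro s hDs
    have hDne : D s ≠ 0 := ne_of_gt hDs
    have hD' : HasDerivAt D (-((ξ - 2 * ζ) * (Real.exp (-2 * ζ * s) * (-2 * ζ)))) s := by
      have h1 : HasDerivAt (fun t : ℝ => -2 * ζ * t) (-2 * ζ) s := by
        simpa using (hasDerivAt_id s).const_mul (-2 * ζ)
      exact (h1.exp.const_mul (ξ - 2 * ζ)).const_sub ξ
    refine ⟨?_, ?_, ?_⟩
    · -- ρ component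
      have h1 : HasDerivAt (fun t : ℝ => 2 * ζ * t) (2 * ζ) s := by
        simpa using (hasDerivAt_id s).const_mul (2 * ζ)
      have h2 : HasDerivAt Φρ (ρ₀ * (ξ / (2 * ζ) * (Real.exp (2 * ζ * s) * (2 * ζ)))) s := by
        exact (((h1.exp.sub_const 1).const_mul (ξ / (2 * ζ))).const_add 1).const_mul ρ₀
      convert h2 using 1
      simp only [Φξ, Φρ, D]
      have hA : Real.exp (-2 * ζ * s) = (Real.exp (2 * ζ * s))⁻¹ := by
        rw [← Real.exp_neg]; congr 1; ring
      have hAne : Real.exp (2 * ζ * s) ≠ 0 := (Real.exp_pos _).ne'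
      simp only [D] at hDne
      rw [hA] at hDne ⊢
      have hne2 : ξ * Real.exp (2 * ζ * s) - (ξ - 2 * ζ) ≠ 0 := by
        intro h
        apply hDne
        field_simp
        linarith [h]
      rw [show ξ - (ξ - 2 * ζ) * (Real.exp (2 * ζ * s))⁻¹
          = (ξ * Real.exp (2 * ζ * s) - (ξ - 2 * ζ)) / Real.exp (2 * ζ * s) by field_simp]
      field_simp [hne2]
      ring
    · -- ξ component
      have h2 : HasDerivAt Φξ ((0 * D s - 2 * ξ * ζ * (-((ξ - 2 * ζ) * (Real.exp (-2 * ζ * s) * (-2 * ζ))))) / D s ^ 2) s :=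
        (hasDerivAt_const s (2 * ξ * ζ)).div hD' hDne
      convert h2 using 1
      rw [hnorm s, hη2]
      simp only [div_pow]
      rw [mul_pow, mul_pow, hEsq s]
      field_simp
      ring
    · -- η component
      have h1 : HasDerivAt (fun t : ℝ => -ζ * t) (-ζ) s := by
        simpa using (hasDerivAt_id s).const_mul (-ζ)
      have hc : HasDerivAt (fun t => 2 * ζ * Real.exp (-ζ * t) / D t)
          ((2 * ζ * (Real.exp (-ζ * s) * (-ζ)) * D s -
            2 * ζ * Real.exp (-ζ * s) * (-((ξ - 2 * ζ) * (Real.exp (-2 * ζ * s) * (-2 * ζ))))) / D s ^ 2) s :=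
        (h1.exp.const_mul (2 * ζ)).div hD' hDne
      have h2 := hc.smul_const η
      refine h2.congr_deriv ?_
      symm
      simp only [Φη, Φξ]
      rw [smul_smul]
      congr 1
      have hF := hEsq s
      simp only [D]
      rw [← hF]
      have hΔ : ξ - (ξ - 2 * ζ) * Real.exp (-ζ * s) ^ 2 ≠ 0 := by
        rw [hF]; simpa [D] using hDne
      have hu : (ξ - (ξ - 2 * ζ) * Real.exp (-ζ * s) ^ 2)
          * (ξ - (ξ - 2 * ζ) * Real.exp (-ζ * s) ^ 2)⁻¹ = 1 := mul_inv_cancel₀ hΔ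
      simp only [div_eq_mul_inv, pow_two, mul_inv] at hu ⊢
      linear_combination (-2 * ζ ^ 2 * Real.exp (-ζ * s)
        * (ξ - (ξ - 2 * ζ) * Real.exp (-ζ * s) ^ 2)⁻¹) * hu
  · intro s hDs
    have hDne : D s ≠ 0 := ne_of_gt hDs
    rw [hnorm s, hη2]
    simp only [Φξ, div_pow, mul_pow]
    rw [hEsq s]
    simp only [D] at hDne ⊢
    have hu : (ξ - (ξ - 2 * ζ) * Real.exp (-2 * ζ * s))
        * (ξ - (ξ - 2 * ζ) * Real.exp (-2 * ζ * s))⁻¹ = 1 := mul_inv_cancel₀ hDne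
    simp only [div_eq_mul_inv, pow_two, mul_inv] at hu ⊢
    linear_combination (-2 * ξ * ζ ^ 2
      * (ξ - (ξ - 2 * ζ) * Real.exp (-2 * ζ * s))⁻¹) * hu
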